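/- For every i ∈ ℕ₀ and every a with 2 ≤ a ≤ (p−1)/2, the map ϑ_a lies in Ĥ_i; that is, the additive subgroup of O generated by {ϑ_a(x, y) : x, y ∈ 𝔭^i} equals 𝔭^{2i+1}. -/

import Mathlib

set_option synthInstance.maxHeartbeats 1000000
set_option maxHeartbeats 1000000

namespace MaximalClassFrame

variable (p : ℕ) [Fact p.Prime]
variable (K : Type) [Field K] [Algebra ℚ_[p] K] [Algebra ℤ_[p] K]
  [IsScalarTower ℤ_[p] ℚ_[p] K]

/-- The maximal order `𝒪` of `K`: the integral closure of `ℤ_p` in `K`. -/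
noncomputable abbrev 𝒪 : Subalgebra ℤ_[p] K := integralClosure ℤ_[p] K

variable (θ : 𝒪 p K)

/-- The maximal ideal `𝔭` of `𝒪`, generated by `κ = θ - 1`. -/
noncomputable def pid : Ideal (𝒪 p K) := Ideal.span {θ - 1}

/-- A `ℤ_p`-bilinear map `γ : 𝒪 × 𝒪 → 𝒪` is `P`-equivariant if it is
alternating and satisfies `γ(θx, θy) = θ·γ(x,y)` for all `x, y`. -/
def IsPEquivariant (γ : 𝒪 p K →ₗ[ℤ_[p]] 𝒪 p K →ₗ[ℤ_[p]] 𝒪 p K) : Prop :=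
  (∀ x, γ x x = 0) ∧ ∀ x y, γ (θ * x) (θ * y) = θ * γ x y

/-- `γ ∈ Ĥ_i`: the additive subgroup of `𝒪` generated by
`{γ(x,y) : x, y ∈ 𝔭^i}` equals `𝔭^(2i+1)`. -/
def InHhat (i : ℕ) (γ : 𝒪 p K →ₗ[ℤ_[p]] 𝒪 p K →ₗ[ℤ_[p]] 𝒪 p K) : Prop :=
  Submodule.span ℤ (Set.image2 (fun x y => γ x y)
      ((pid p K θ ^ i : Ideal (𝒪 p K)) : Set (𝒪 p K))
      ((pid p K θ ^ i : Ideal (𝒪 p K)) : Set (𝒪 p K)))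
    = (pid p K θ ^ (2 * i + 1)).restrictScalars ℤ

variable (σ : ℤ → (K →ₐ[ℚ_[p]] K))

/-- The map `ϑ_a(x,y) = σ_a(x)·σ_{1-a}(y) − σ_{1-a}(x)·σ_a(y)` on `K × K`. -/
noncomputable def thetaMap (a : ℤ) : K → K → K :=
  fun x y => σ a x * σ (1 - a) y - σ (1 - a) x * σ a y

/-! ### Auxiliary results -/

open Polynomial Algebra

/-- The polynomial `Φ_p(X+1)` is Eisenstein at `(p)` over `ℤ_p`. -/
theorem aux_cz_eisenstein :
    ((cyclotomic p ℤ_[p]).comp (X + 1)).IsEisensteinAt (Ideal.span {(p : ℤ_[p])}) := by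
  have hp := (Fact.out : p.Prime)
  have hmapC : Polynomial.map (Int.castRingHom ℤ_[p]) ((cyclotomic p ℤ).comp (X + 1))
      = (cyclotomic p ℤ_[p]).comp (X + 1) := by
    rw [Polynomial.map_comp, map_cyclotomic]; simp
  have E := cyclotomic_comp_X_add_one_isEisensteinAt p
  have hmonZ : ((cyclotomic p ℤ).comp (X + 1)).Monic := by
    rw [show (X + 1 : ℤ[X]) = X + C 1 by simp]
    exact (cyclotomic.monic p ℤ).comp (monic_X_add_C 1)
      (by rw [natDegree_X_add_C]; exact one_ne_zero)
  have hmon : ((cyclotomic p ℤ_[p]).comp (X + 1)).Monic := by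
    rw [← hmapC]; exact hmonZ.map _
  have hdeg : ((cyclotomic p ℤ_[p]).comp (X + 1)).natDegree
      = ((cyclotomic p ℤ).comp (X + 1)).natDegree := by
    rw [← hmapC, hmonZ.natDegree_map]
  have hspan_ne : (Ideal.span {(p : ℤ_[p])}) ≠ ⊤ :=
    ((Ideal.span_singleton_prime (by exact_mod_cast hp.ne_zero)).2 PadicInt.prime_p).ne_top
  refine hmon.isEisensteinAt_of_mem_of_notMem hspan_ne (fun {n} hn => ?_) ?_
  · rw [← hmapC, coeff_map]
    rw [hdeg] at hn
    have h1 := E.mem hn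
    rw [Ideal.submodule_span_eq, Ideal.mem_span_singleton] at h1
    obtain ⟨k, hk⟩ := h1
    rw [Ideal.mem_span_singleton, hk]
    exact ⟨(k : ℤ_[p]), by simp [hk]⟩
  · have hc0 : ((cyclotomic p ℤ).comp (X + 1)).coeff 0 = (p : ℤ) := by
      rw [coeff_zero_eq_eval_zero, eval_comp]
      simp [eval_one_cyclotomic_prime]
    rw [← hmapC, coeff_map, hc0]
    rw [Ideal.span_singleton_pow, Ideal.mem_span_singleton]
    intro h
    obtain ⟨t, ht⟩ := h
    rw [map_natCast] at ht
    have hp0 : (p : ℤ_[p]) ≠ 0 := PadicInt.prime_p.ne_zero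
    have h1 : (1 : ℤ_[p]) = (p : ℤ_[p]) * t := by
      apply mul_left_cancel₀ hp0
      rw [mul_one]
      conv_lhs => rw [ht]
      ring
    exact PadicInt.prime_p.not_unit (IsUnit.of_mul_eq_one _ h1.symm)

/-- Every element of `K` that is integral over `ℤ_p` lies in `ℤ_p[θ]`. -/
theorem aux_integral_mem_adjoin {θ : K} (hθ : IsPrimitiveRoot θ p)
    (hgen : Algebra.adjoin ℚ_[p] {θ} = ⊤) {z : K} (hz : IsIntegral ℤ_[p] z) :
    z ∈ Algebra.adjoin ℤ_[p] {θ} := by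
  have hp := (Fact.out : p.Prime)
  have hppos : 0 < p := hp.pos
  have hintθ : IsIntegral ℤ_[p] θ :=
    ⟨X ^ p - C 1, monic_X_pow_sub_C _ hppos.ne', by simp [hθ.pow_eq_one]⟩
  have hintθq : IsIntegral ℚ_[p] θ := hintθ.tower_top
  have hintsubq : IsIntegral ℚ_[p] (θ - 1) := hintθq.sub isIntegral_one
  have hintsub : IsIntegral ℤ_[p] (θ - 1) := hintθ.sub isIntegral_one
  have hgen' : Algebra.adjoin ℚ_[p] {θ - 1} = ⊤ := by
    rw [_root_.eq_top_iff, ← hgen]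
    apply Algebra.adjoin_le
    intro x hx
    rw [Set.mem_singleton_iff] at hx
    have hmem : θ ∈ Algebra.adjoin ℚ_[p] {θ - 1} := by
      have := add_mem (Algebra.subset_adjoin (Set.mem_singleton (θ - 1)))
        (one_mem (Algebra.adjoin ℚ_[p] {θ - 1}))
      simpa using this
    exact hx ▸ hmem
  let B : PowerBasis ℚ_[p] K :=
    (Algebra.adjoin.powerBasis hintsubq).map
      ((Subalgebra.equivOfEq _ _ hgen').trans Subalgebra.topEquiv)
  have hBgen : B.gen = θ - 1 := by
    simp [B, Algebra.adjoin.powerBasis_gen]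
  haveI : FiniteDimensional ℚ_[p] K := B.finite
  have hirrZ : Irreducible ((cyclotomic p ℤ_[p]).comp (X + 1)) := by
    refine (aux_cz_eisenstein (p := p)).irreducible
      ((Ideal.span_singleton_prime (by exact_mod_cast hp.ne_zero)).2 PadicInt.prime_p)
      ?_ ?_
    · refine Polynomial.Monic.isPrimitive ?_
      rw [show (X + 1 : ℤ_[p][X]) = X + C 1 by simp]
      exact (cyclotomic.monic p ℤ_[p]).comp (monic_X_add_C 1)
        (by rw [natDegree_X_add_C]; exact one_ne_zero)
    · rw [natDegree_comp]
      rw [show (X + 1 : ℤ_[p][X]) = X + C 1 by simp, natDegree_X_add_C, mul_one,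
        natDegree_cyclotomic]
      exact Nat.totient_pos.2 hppos
  have hmapq : Polynomial.map (algebraMap ℤ_[p] ℚ_[p]) ((cyclotomic p ℤ_[p]).comp (X + 1))
      = (cyclotomic p ℚ_[p]).comp (X + 1) := by
    rw [Polynomial.map_comp, map_cyclotomic]; simp
  have hmonZ : ((cyclotomic p ℤ_[p]).comp (X + 1)).Monic := by
    rw [show (X + 1 : ℤ_[p][X]) = X + C 1 by simp]
    exact (cyclotomic.monic p ℤ_[p]).comp (monic_X_add_C 1)
      (by rw [natDegree_X_add_C]; exact one_ne_zero)
  have hirrq : Irreducible ((cyclotomic p ℚ_[p]).comp (X + 1)) := by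
    rw [← hmapq]
    exact (hmonZ.irreducible_iff_irreducible_map_fraction_map).1 hirrZ
  have haev : (aeval (θ - 1)) ((cyclotomic p ℚ_[p]).comp (X + 1)) = 0 := by
    rw [aeval_comp]
    have h1 : (aeval (θ - 1)) (X + 1 : ℚ_[p][X]) = θ := by simp
    rw [h1, aeval_def, ← eval_map, map_cyclotomic]
    exact (hθ.isRoot_cyclotomic hppos).eq_zero
  have hmonq : ((cyclotomic p ℚ_[p]).comp (X + 1)).Monic := hmapq ▸ hmonZ.map _
  have hminq : minpoly ℚ_[p] (θ - 1) = (cyclotomic p ℚ_[p]).comp (X + 1) :=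
    (minpoly.eq_of_irreducible_of_monic hirrq haev hmonq).symm
  have hminZ : minpoly ℤ_[p] (θ - 1) = (cyclotomic p ℤ_[p]).comp (X + 1) := by
    have h1 : minpoly ℚ_[p] (θ - 1)
        = (minpoly ℤ_[p] (θ - 1)).map (algebraMap ℤ_[p] ℚ_[p]) :=
      minpoly.isIntegrallyClosed_eq_field_fractions' ℚ_[p] hintsub
    apply Polynomial.map_injective (algebraMap ℤ_[p] ℚ_[p])
      (IsFractionRing.injective ℤ_[p] ℚ_[p])
    rw [← h1, hminq, hmapq]
  have hmin : (minpoly ℤ_[p] B.gen).IsEisensteinAt (Ideal.span {(p : ℤ_[p])}) := by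
    rw [hBgen, hminZ]
    exact aux_cz_eisenstein p
  have hBint : IsIntegral ℤ_[p] B.gen := hBgen ▸ hintsub
  have H := discr_mul_isIntegral_mem_adjoin ℚ_[p] hBint hz
  have hdint : IsIntegral ℤ_[p] (Algebra.discr ℚ_[p] B.basis) := by
    refine Algebra.discr_isIntegral ℚ_[p] (fun i => ?_)
    rw [B.basis_eq_pow i]
    exact hBint.pow _
  obtain ⟨c, hc⟩ := IsIntegrallyClosed.isIntegral_iff.1 hdint
  have hd0 : Algebra.discr ℚ_[p] B.basis ≠ 0 := Algebra.discr_not_zero_of_basis ℚ_[p] B.basis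
  have hc0 : c ≠ 0 := by
    rintro rfl
    rw [map_zero] at hc
    exact hd0 hc.symm
  have spec := PadicInt.unitCoeff_spec hc0
  rw [← hc, algebraMap_smul, spec, mul_smul] at H
  replace H := Subalgebra.smul_mem _ H (((PadicInt.unitCoeff hc0)⁻¹ : ℤ_[p]ˣ) : ℤ_[p])
  rw [smul_smul, Units.inv_mul, one_smul] at H
  have hfin := mem_adjoin_of_smul_prime_pow_smul_of_minpoly_isEisensteinAt
    (K := ℚ_[p]) PadicInt.prime_p hBint hz H (by rwa [Ideal.submodule_span_eq])
  rw [hBgen] at hfin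
  have hle : Algebra.adjoin ℤ_[p] {θ - 1} ≤ Algebra.adjoin ℤ_[p] {θ} := by
    apply Algebra.adjoin_le
    intro x hx
    rw [Set.mem_singleton_iff] at hx
    exact hx ▸ sub_mem (Algebra.subset_adjoin (Set.mem_singleton θ)) (one_mem _)
  exact hle hfin

/-- Every element of `𝒪` is a `ℤ_p`-polynomial in `θ`. -/
theorem aux_exists_aeval (hθ : IsPrimitiveRoot (θ : K) p)
    (hgen : Algebra.adjoin ℚ_[p] {(θ : K)} = ⊤) (x : 𝒪 p K) :
    ∃ f : ℤ_[p][X], (x : K) = aeval (θ : K) f := by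
  have hx : (x : K) ∈ Algebra.adjoin ℤ_[p] {(θ : K)} :=
    aux_integral_mem_adjoin p K hθ hgen x.2
  rw [Algebra.adjoin_singleton_eq_range_aeval] at hx
  obtain ⟨f, hf⟩ := hx
  exact ⟨f, hf.symm⟩

/-- Evaluation of a mapped polynomial in `𝒪`, coerced to `K`. -/
theorem aux_coe_eval (f : ℤ_[p][X]) (x : 𝒪 p K) :
    (((f.map (algebraMap ℤ_[p] (𝒪 p K))).eval x : 𝒪 p K) : K) = aeval (x : K) f := by
  rw [Polynomial.eval_map]
  rw [show ((eval₂ (algebraMap ℤ_[p] (𝒪 p K)) x f : 𝒪 p K) : K)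
      = (Subalgebra.val _).toRingHom (eval₂ (algebraMap ℤ_[p] (𝒪 p K)) x f) from rfl,
    Polynomial.hom_eval₂, aeval_def]
  congr 1

/-- For `p ∤ m`, `θ^m - 1` is `θ - 1` times a unit of `𝒪`. -/
theorem aux_exists_unit (hθ : IsPrimitiveRoot (θ : K) p) {m : ℕ} (hm : ¬ p ∣ m) :
    ∃ u : (𝒪 p K)ˣ, θ ^ m - 1 = (θ - 1) * u := by
  have hp := (Fact.out : p.Prime)
  have hθp : θ ^ p = 1 := Subtype.ext (by push_cast; exact hθ.pow_eq_one)
  have hκ0 : θ - (1 : 𝒪 p K) ≠ 0 := by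
    rw [sub_ne_zero]
    intro h
    exact hθ.ne_one hp.one_lt (by exact_mod_cast congrArg Subtype.val h)
  set c : 𝒪 p K := ∑ k ∈ Finset.range m, θ ^ k with hcdef
  have h1 : θ ^ m - 1 = (θ - 1) * c := by
    rw [hcdef, mul_comm, geom_sum_mul]
  obtain ⟨m', -, hm'⟩ := Nat.exists_mul_mod_eq_one_of_coprime
    ((Nat.Prime.coprime_iff_not_dvd hp).2 hm).symm hp.one_lt
  have hmm' : θ ^ (m * m') = θ := by
    conv_lhs => rw [← Nat.div_add_mod (m * m') p]
    rw [pow_add, pow_mul, hθp, one_pow, one_mul, hm', pow_one]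
  set d : 𝒪 p K := ∑ k ∈ Finset.range m', (θ ^ m) ^ k with hddef
  have h2 : d * (θ ^ m - 1) = θ - 1 := by
    rw [hddef, geom_sum_mul, ← pow_mul, hmm']
  have h3 : (θ - 1) * (c * d) = (θ - 1) * 1 := by
    rw [mul_one]
    calc (θ - 1) * (c * d) = d * ((θ - 1) * c) := by ring
    _ = θ - 1 := by rw [← h1, h2]
  have h4 : c * d = 1 := mul_left_cancel₀ hκ0 h3
  exact ⟨(IsUnit.of_mul_eq_one d h4).unit, by rw [IsUnit.unit_spec, ← h1]⟩

/-- For every `i` and `2 ≤ a ≤ (p−1)/2`, `ϑ_a ∈ Ĥ_i`: the additive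
subgroup of `𝒪` generated by `{ϑ_a(x,y) : x, y ∈ 𝔭^i}` equals `𝔭^{2i+1}`. -/
theorem frame_theta_in_Hhat (hp : 5 ≤ p) (hθ : IsPrimitiveRoot (θ : K) p)
    (hgen : Algebra.adjoin ℚ_[p] {(θ : K)} = ⊤)
    (hσ : ∀ j : ℤ, ¬ ((p : ℤ) ∣ j) → σ j (θ : K) = (θ : K) ^ j)
    (i : ℕ) (a : ℕ) (ha2 : 2 ≤ a) (ha : a ≤ (p - 1) / 2) :
    Submodule.span ℤ {z : 𝒪 p K | ∃ x ∈ pid p K θ ^ i, ∃ y ∈ pid p K θ ^ i,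
        (z : K) = thetaMap p K σ (a : ℤ) (x : K) (y : K)}
      = (pid p K θ ^ (2 * i + 1)).restrictScalars ℤ := by
  classical
  have hp' := (Fact.out : p.Prime)
  have hppos : 0 < p := hp'.pos
  set κ : 𝒪 p K := θ - 1 with hκdef
  have hθKp : (θ : K) ^ p = 1 := hθ.pow_eq_one
  have hθK0 : (θ : K) ≠ 0 := hθ.ne_zero hppos.ne'
  have hθp : θ ^ p = 1 := Subtype.ext (by push_cast; exact hθKp)
  have hκ0 : κ ≠ 0 := by
    rw [hκdef, sub_ne_zero]
    intro h
    exact hθ.ne_one hp'.one_lt (by exact_mod_cast congrArg Subtype.val h)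
  -- arithmetic on exponents
  have hap : a < p := by
    have h1 : (p - 1) / 2 ≤ p - 1 := Nat.div_le_self _ _
    omega
  have h2a : 2 * a ≤ p - 1 := by
    have h2 : 2 ∣ p - 1 := by
      have : Odd p := hp'.odd_of_ne_two (by omega)
      obtain ⟨k, hk⟩ := this
      omega
    obtain ⟨t, ht⟩ := h2
    omega
  set b : ℕ := p + 1 - a with hbdef
  set c : ℕ := b - a with hcdef
  have hb1 : a + c = b := by omega
  have hc2 : 2 ≤ c := by omega
  have hcp : c ≤ p - 1 := by omega
  have hb2 : 2 ≤ b := by omega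
  have hbp : b ≤ p - 1 := by omega
  have hab : a + b = p + 1 := by omega
  -- non-divisibility
  have hndvd : ∀ m : ℕ, 1 ≤ m → m ≤ p - 1 → ¬ p ∣ m := by
    intro m h1 h2 h
    have := Nat.le_of_dvd (by omega) h
    omega
  have hpa : ¬ ((p : ℤ) ∣ ((a : ℕ) : ℤ)) := by
    rw [Int.natCast_dvd_natCast]
    exact hndvd a (by omega) (by omega)
  have hpb' : ¬ ((p : ℤ) ∣ (1 - ((a : ℕ) : ℤ))) := by
    intro h
    rw [show (1 - ((a : ℕ) : ℤ)) = -(((a - 1 : ℕ) : ℤ)) by push_cast; omega, dvd_neg,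
      Int.natCast_dvd_natCast] at h
    exact hndvd (a - 1) (by omega) (by omega) h
  -- σ values on θ
  have hσθa : σ (a : ℤ) (θ : K) = (θ : K) ^ a := by
    rw [hσ _ hpa, zpow_natCast]
  have hσθb : σ (1 - (a : ℤ)) (θ : K) = (θ : K) ^ b := by
    rw [hσ _ hpb', show (1 - (a : ℤ)) = (b : ℤ) - (p : ℤ) by push_cast; omega,
      zpow_sub₀ hθK0, zpow_natCast, zpow_natCast, hθKp, div_one]
  -- units
  obtain ⟨ua, hua⟩ := aux_exists_unit p K θ hθ (hndvd a (by omega) (by omega))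
  obtain ⟨ub, hub⟩ := aux_exists_unit p K θ hθ (hndvd b (by omega) (by omega))
  obtain ⟨uc, huc⟩ := aux_exists_unit p K θ hθ (hndvd c (by omega) (by omega))
  rw [← hκdef] at hua hub huc
  -- σ values on κ, coerced
  have hσκa : σ (a : ℤ) ((κ : 𝒪 p K) : K) = (κ : K) * ((ua : 𝒪 p K) : K) := by
    have h1 : σ (a : ℤ) ((κ : 𝒪 p K) : K) = ((θ ^ a - 1 : 𝒪 p K) : K) := by
      rw [hκdef]
      push_cast
      rw [map_sub, map_one, hσθa]
    rw [h1, hua]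
    push_cast
    ring
  have hσκb : σ (1 - (a : ℤ)) ((κ : 𝒪 p K) : K) = (κ : K) * ((ub : 𝒪 p K) : K) := by
    have h1 : σ (1 - (a : ℤ)) ((κ : 𝒪 p K) : K) = ((θ ^ b - 1 : 𝒪 p K) : K) := by
      rw [hκdef]
      push_cast
      rw [map_sub, map_one, hσθb]
    rw [h1, hub]
    push_cast
    ring
  -- the difference lemma
  have hdiff : ∀ v : 𝒪 p K, ∃ d : 𝒪 p K,
      σ (1 - (a : ℤ)) ((v : 𝒪 p K) : K) - σ (a : ℤ) ((v : 𝒪 p K) : K)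
        = ((κ * d : 𝒪 p K) : K) := by
    intro v
    obtain ⟨f, hf⟩ := aux_exists_aeval p K θ hθ hgen v
    set F := f.map (algebraMap ℤ_[p] (𝒪 p K)) with hFdef
    have hkey : ∀ (j : ℤ) (m : ℕ), σ j (θ : K) = (θ : K) ^ m →
        σ j ((v : 𝒪 p K) : K) = ((F.eval (θ ^ m) : 𝒪 p K) : K) := by
      intro j m hj
      have e1 : ((F.eval (θ ^ m) : 𝒪 p K) : K) = aeval ((θ ^ m : 𝒪 p K) : K) f := by
        rw [hFdef]; exact aux_coe_eval p K f (θ ^ m)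
      rw [e1, hf]
      rw [show σ j (aeval ((θ : K)) f) = ((σ j).restrictScalars ℤ_[p]) (aeval ((θ : K)) f)
          from rfl, ← aeval_algHom_apply]
      rw [show ((σ j).restrictScalars ℤ_[p]) (θ : K) = σ j (θ : K) from rfl, hj]
      norm_cast
    have hvb := hkey (1 - (a : ℤ)) b hσθb
    have hva := hkey (a : ℤ) a hσθa
    obtain ⟨d₀, hd₀⟩ := sub_dvd_eval_sub (θ ^ b) (θ ^ a) F
    have hba : θ ^ b - θ ^ a = κ * (θ ^ a * uc) := by
      calc θ ^ b - θ ^ a = θ ^ a * (θ ^ c - 1) := by rw [← hb1, pow_add]; ring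
      _ = κ * (θ ^ a * uc) := by rw [huc]; ring
    refine ⟨θ ^ a * uc * d₀, ?_⟩
    rw [hvb, hva]
    have h2 : F.eval (θ ^ b) - F.eval (θ ^ a) = κ * (θ ^ a * uc * d₀) := by
      rw [hd₀, hba]; ring
    calc ((F.eval (θ ^ b) : 𝒪 p K) : K) - ((F.eval (θ ^ a) : 𝒪 p K) : K)
        = ((F.eval (θ ^ b) - F.eval (θ ^ a) : 𝒪 p K) : K) := by push_cast; ring
    _ = _ := by rw [h2]
  -- powers of the ideal
  have hpid : ∀ n : ℕ, pid p K θ ^ n = Ideal.span {κ ^ n} := by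
    intro n
    rw [pid, ← hκdef, Ideal.span_singleton_pow]
  have hσint : ∀ (j : ℤ) (x : 𝒪 p K), IsIntegral ℤ_[p] (σ j (x : K)) :=
    fun j x => x.2.map ((σ j).restrictScalars ℤ_[p])
  set T : Set (𝒪 p K) := {z : 𝒪 p K | ∃ x ∈ pid p K θ ^ i, ∃ y ∈ pid p K θ ^ i,
      (z : K) = thetaMap p K σ (a : ℤ) (x : K) (y : K)} with hTdef
  apply le_antisymm
  · -- ϑ-values lie in 𝔭^(2i+1)
    rw [Submodule.span_le]
    intro z hz
    rw [hTdef] at hz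
    obtain ⟨x, hx, y, hy, hzeq⟩ := hz
    rw [SetLike.mem_coe, Submodule.restrictScalars_mem, hpid]
    rw [hpid] at hx hy
    obtain ⟨x₁, hx₁⟩ := Ideal.mem_span_singleton'.1 hx
    obtain ⟨y₁, hy₁⟩ := Ideal.mem_span_singleton'.1 hy
    obtain ⟨dx, hdx⟩ := hdiff x₁
    obtain ⟨dy, hdy⟩ := hdiff y₁
    have hX3 : σ (1 - (a : ℤ)) ((x₁ : 𝒪 p K) : K)
        = σ (a : ℤ) ((x₁ : 𝒪 p K) : K) + (κ : K) * ((dx : 𝒪 p K) : K) := by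
      have h := hdx
      push_cast at h
      linear_combination h
    have hY3 : σ (1 - (a : ℤ)) ((y₁ : 𝒪 p K) : K)
        = σ (a : ℤ) ((y₁ : 𝒪 p K) : K) + (κ : K) * ((dy : 𝒪 p K) : K) := by
      have h := hdy
      push_cast at h
      linear_combination h
    set X2 : 𝒪 p K := ⟨σ (a : ℤ) ((x₁ : 𝒪 p K) : K), hσint _ _⟩ with hX2
    set Y2 : 𝒪 p K := ⟨σ (a : ℤ) ((y₁ : 𝒪 p K) : K), hσint _ _⟩ with hY2
    refine Ideal.mem_span_singleton'.2
      ⟨(ua : 𝒪 p K) ^ i * (ub : 𝒪 p K) ^ i * (X2 * dy - dx * Y2), ?_⟩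
    apply Subtype.ext
    push_cast
    rw [hzeq, ← hx₁, ← hy₁]
    simp only [thetaMap]
    push_cast
    simp only [map_mul, map_pow, hσκa, hσκb, hX3, hY3]
    ring
  · -- 𝔭^(2i+1) is contained in the span
    intro z hz
    rw [Submodule.restrictScalars_mem, hpid] at hz
    obtain ⟨wz, hwz⟩ := Ideal.mem_span_singleton'.1 hz
    have hθu : IsUnit θ := IsUnit.of_mul_eq_one (θ ^ (p - 1))
      (by rw [← pow_succ', show p - 1 + 1 = p by omega, hθp])
    set U : (𝒪 p K)ˣ := ua ^ i * ub ^ i * hθu.unit ^ a * uc with hUdef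
    have hUcoe : (U : 𝒪 p K)
        = (ua : 𝒪 p K) ^ i * (ub : 𝒪 p K) ^ i * θ ^ a * (uc : 𝒪 p K) := by
      rw [hUdef]
      push_cast
      rw [IsUnit.unit_spec]
    have hsubO : (ub : 𝒪 p K) - (ua : 𝒪 p K) = θ ^ a * uc := by
      have h1 : κ * ((ub : 𝒪 p K) - ua) = κ * (θ ^ a * uc) := by
        calc κ * ((ub : 𝒪 p K) - ua) = (θ ^ b - 1) - (θ ^ a - 1) := by
              rw [hub, hua]; ring
        _ = θ ^ a * (θ ^ c - 1) := by rw [← hb1, pow_add]; ring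
        _ = κ * (θ ^ a * uc) := by rw [huc]; ring
      exact mul_left_cancel₀ hκ0 h1
    have hsubK : ((ub : 𝒪 p K) : K) - ((ua : 𝒪 p K) : K)
        = (θ : K) ^ a * ((uc : 𝒪 p K) : K) := by
      have h := congrArg (Subtype.val) hsubO
      push_cast at h
      exact h
    have hθabk : ∀ k : ℕ, ((θ : K) ^ a) ^ k * ((θ : K) ^ b) ^ k = (θ : K) ^ k := by
      intro k
      rw [← pow_mul, ← pow_mul, ← pow_add, ← Nat.add_mul, hab,
        show (p + 1) * k = k + p * k by ring, pow_add, pow_mul, hθKp, one_pow, mul_one]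
    have hT : ∀ k : ℕ, (θ ^ k * (κ ^ (2 * i + 1) * (U : 𝒪 p K))) ∈ T := by
      intro k
      rw [hTdef]
      refine ⟨θ ^ k * κ ^ i, ?_, θ ^ k * (κ ^ i * κ), ?_, ?_⟩
      · rw [hpid]; exact Ideal.mem_span_singleton'.2 ⟨θ ^ k, rfl⟩
      · rw [hpid]; exact Ideal.mem_span_singleton'.2 ⟨θ ^ k * κ, by ring⟩
      · rw [hUcoe]
        simp only [thetaMap]
        push_cast
        simp only [map_mul, map_pow, hσθa, hσθb, hσκa, hσκb]
        linear_combination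
          (-((κ : K) ^ (2 * i + 1) * ((ua : 𝒪 p K) : K) ^ i * ((ub : 𝒪 p K) : K) ^ i
            * (((ub : 𝒪 p K) : K) - ((ua : 𝒪 p K) : K)))) * hθabk k
          + (-((κ : K) ^ (2 * i + 1) * ((ua : 𝒪 p K) : K) ^ i * ((ub : 𝒪 p K) : K) ^ i
            * (θ : K) ^ k)) * hsubK
    have hSmul : ∀ (co : ℤ_[p]) (s : 𝒪 p K), s ∈ Submodule.span ℤ T →
        co • s ∈ Submodule.span ℤ T := by
      intro co s hs
      induction hs using Submodule.span_induction with
      | mem t ht =>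
        apply Submodule.subset_span
        rw [hTdef] at ht ⊢
        obtain ⟨x, hx, y, hy, hteq⟩ := ht
        refine ⟨co • x, ?_, y, hy, ?_⟩
        · rw [Algebra.smul_def]
          exact Ideal.mul_mem_left _ _ hx
        · have h1 : ((co • t : 𝒪 p K) : K) = co • (t : K) := rfl
          have h2 : ((co • x : 𝒪 p K) : K) = co • (x : K) := rfl
          rw [h1, hteq]
          simp only [thetaMap, h2]
          rw [show σ (a : ℤ) (co • (x : K)) = co • σ (a : ℤ) (x : K) from
              map_smul ((σ (a : ℤ)).restrictScalars ℤ_[p]) co (x : K),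
            show σ (1 - (a : ℤ)) (co • (x : K)) = co • σ (1 - (a : ℤ)) (x : K) from
              map_smul ((σ (1 - (a : ℤ))).restrictScalars ℤ_[p]) co (x : K)]
          rw [smul_sub, smul_mul_assoc, smul_mul_assoc]
      | zero => rw [smul_zero]; exact Submodule.zero_mem _
      | add u v hu hv ihu ihv => rw [smul_add]; exact Submodule.add_mem _ ihu ihv
      | smul n u hu ihu => rw [smul_comm]; exact Submodule.smul_mem _ n ihu
    have hwg : ∀ w : 𝒪 p K,
        w * (κ ^ (2 * i + 1) * (U : 𝒪 p K)) ∈ Submodule.span ℤ T := by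
      intro w
      obtain ⟨f, hf⟩ := aux_exists_aeval p K θ hθ hgen w
      have hw : w = ∑ k ∈ Finset.range (f.natDegree + 1), f.coeff k • θ ^ k := by
        apply Subtype.ext
        rw [hf, aeval_eq_sum_range]
        push_cast
        rfl
      rw [hw, Finset.sum_mul]
      refine Submodule.sum_mem _ (fun k _ => ?_)
      rw [smul_mul_assoc]
      exact hSmul _ _ (Submodule.subset_span (hT k))
    have hz' : z = (wz * ((U⁻¹ : (𝒪 p K)ˣ) : 𝒪 p K)) * (κ ^ (2 * i + 1) * (U : 𝒪 p K)) := by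
      rw [← hwz]
      calc wz * κ ^ (2 * i + 1)
          = wz * κ ^ (2 * i + 1) * (((U⁻¹ : (𝒪 p K)ˣ) : 𝒪 p K) * (U : 𝒪 p K)) := by
            rw [Units.inv_mul, mul_one]
      _ = _ := by ring
    rw [hz']
    exact hwg _

end MaximalClassFrame
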